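/- Let N be a finite set of nodes and g : N × N → ℝ a symmetric function with g(m,n) ≥ 0 representing edge conductances. Let V : N → ℝ be a potential function and define the induced (Ohmic) flow f*(m,n) = g(m,n)·(V(m) − V(n)). Let f : N × N → ℝ be any antisymmetric flow (f(m,n) = −f(n,m)) supported on the edges (f(m,n) = 0 whenever g(m,n) = 0) that has the same divergence as f*, i.e. Σ_n f(m,n) = Σ_n f*(m,n) for every node m. Then Σ_{(m,n) : g(m,n) > 0} f(m,n)²/g(m,n) ≥ Σ_{(m,n) : g(m,n) > 0} f*(m,n)²/g(m,n). (Thomson's principle: among all flows with the given net injections, the Ohmic flow minimizes the total I²R dissipation.) -/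
import Mathlib


open Finset

/-- Thomson's principle: among all antisymmetric flows supported on the conducting edges
and having the same divergence as the Ohmic flow `f*(m,n) = g(m,n)·(V m − V n)`, the
Ohmic flow minimizes the total I²R dissipation `Σ f(m,n)²/g(m,n)`. -/
theorem thomson_principle
    {N : Type*} [Fintype N]
    (g : N → N → ℝ) (hg_symm : ∀ m n, g m n = g n m) (hg_nonneg : ∀ m n, 0 ≤ g m n)
    (V : N → ℝ)
    (fstar : N → N → ℝ) (hfstar : ∀ m n, fstar m n = g m n * (V m - V n))
    (f : N → N → ℝ)
    (hf_anti : ∀ m n, f m n = -f n m)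
    (hf_supp : ∀ m n, g m n = 0 → f m n = 0)
    (hf_div : ∀ m, ∑ n, f m n = ∑ n, fstar m n) :
    ∑ p ∈ Finset.univ.filter (fun p : N × N => 0 < g p.1 p.2), f p.1 p.2 ^ 2 / g p.1 p.2 ≥
      ∑ p ∈ Finset.univ.filter (fun p : N × N => 0 < g p.1 p.2),
        fstar p.1 p.2 ^ 2 / g p.1 p.2 := by
  classical
  set d : N → N → ℝ := fun m n => f m n - fstar m n with hd
  set E := Finset.univ.filter (fun p : N × N => 0 < g p.1 p.2) with hE
  -- divergence of d is zero
  have hdiv : ∀ m, ∑ n, d m n = 0 := by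
    intro m
    simp [hd, Finset.sum_sub_distrib, hf_div m]
  -- d is zero off edges
  have hd0 : ∀ m n, g m n = 0 → d m n = 0 := by
    intro m n h
    simp [hd, hf_supp m n h, hfstar, h]
  -- pointwise decomposition on edges
  have hdecomp : ∀ p ∈ E, f p.1 p.2 ^ 2 / g p.1 p.2 =
      fstar p.1 p.2 ^ 2 / g p.1 p.2 + 2 * d p.1 p.2 * (V p.1 - V p.2)
        + d p.1 p.2 ^ 2 / g p.1 p.2 := by
    intro p hp
    simp only [hE, Finset.mem_filter] at hp
    have hgne : g p.1 p.2 ≠ 0 := ne_of_gt hp.2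
    have hf' : f p.1 p.2 = fstar p.1 p.2 + d p.1 p.2 := by simp [hd]
    rw [hf', hfstar]
    field_simp
    ring
  -- d is antisymmetric
  have hdanti : ∀ m n, d n m = - d m n := by
    intro m n
    simp only [hd, hfstar, hf_anti m n, hg_symm n m]
    ring
  -- cross term sums to zero
  have hcross : ∑ p ∈ E, 2 * d p.1 p.2 * (V p.1 - V p.2) = 0 := by
    have hext : ∑ p ∈ E, 2 * d p.1 p.2 * (V p.1 - V p.2)
        = ∑ p : N × N, 2 * d p.1 p.2 * (V p.1 - V p.2) := by
      refine Finset.sum_subset (Finset.subset_univ _) ?_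
      intro p _ hp
      simp only [hE, Finset.mem_filter, Finset.mem_univ, true_and, not_lt] at hp
      have : g p.1 p.2 = 0 := le_antisymm hp (hg_nonneg _ _)
      simp [hd0 _ _ this]
    rw [hext, Fintype.sum_prod_type]
    have h1 : ∀ m : N, ∑ n, 2 * d m n * (V m - V n)
        = 2 * V m * (∑ n, d m n) - 2 * ∑ n, d m n * V n := by
      intro m
      rw [Finset.mul_sum, Finset.mul_sum, ← Finset.sum_sub_distrib]
      exact Finset.sum_congr rfl (fun n _ => by ring)
    have h2 : ∑ m : N, ∑ n : N, d m n * V n = 0 := by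
      rw [Finset.sum_comm]
      refine Finset.sum_eq_zero fun n _ => ?_
      rw [← Finset.sum_mul]
      have : ∑ m : N, d m n = 0 := by
        have : ∑ m : N, d m n = - ∑ m : N, d n m := by
          rw [← Finset.sum_neg_distrib]
          exact Finset.sum_congr rfl fun m _ => (hdanti n m)
        rw [this, hdiv, neg_zero]
      rw [this, zero_mul]
    simp only [h1, hdiv, mul_zero, zero_sub, Finset.sum_neg_distrib, ← Finset.mul_sum, h2,
      mul_zero, neg_zero]
  -- conclude
  have hsum : ∑ p ∈ E, f p.1 p.2 ^ 2 / g p.1 p.2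
      = ∑ p ∈ E, fstar p.1 p.2 ^ 2 / g p.1 p.2 + ∑ p ∈ E, d p.1 p.2 ^ 2 / g p.1 p.2 := by
    rw [Finset.sum_congr rfl hdecomp, Finset.sum_add_distrib, Finset.sum_add_distrib, hcross,
      add_zero]
  rw [ge_iff_le, hsum]
  have : 0 ≤ ∑ p ∈ E, d p.1 p.2 ^ 2 / g p.1 p.2 :=
    Finset.sum_nonneg fun p _ => div_nonneg (sq_nonneg _) (hg_nonneg _ _)
  linarith
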